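/- arXiv:1708.05946 — 4 statements merged into one kernel-verified Lean document; each statement's English description precedes it below -/
import Mathlib

section
/- For every d ≥ 2, the unnormalized 5-qudit vector |Φ⟩ = Σ_{i,j=0}^{d−1} |i⟩⊗|j⟩⊗|i+j⟩⊗|φ_{i,j}⟩ in (ℂ^d)^{⊗5}, where |φ_{i,j}⟩ = Σ_{l=0}^{d−1} ω^{il} |l+j⟩⊗|l⟩ with ω = exp(2πi/d) and addition mod d, is 2-uniform: every reduction of the normalized state to two of the five parties is the maximally mixed state I_{d²}/d². Hence |Φ⟩ is an AME(5,d) state. -/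
open Finset

/-- Merge two assignments: take `f` on `S` and `h` off `S`. -/
def mergeOn {N d : ℕ} (S : Finset (Fin N)) (f h : Fin N → ZMod d) : Fin N → ZMod d :=
  fun t => if t ∈ S then f t else h t

/-- `Φ` is a `k`-uniform (unnormalized) pure state of `N` qudits of dimension `d`:
for every subset `S` of `k` parties, the reduced density matrix of the normalized
state on `S` is the maximally mixed state `I/d^k`.  (Entrywise, the unnormalized
reduction on `S` equals `⟨Φ,Φ⟩/d^k` times the identity; summing over all of
`Fin N → ZMod d` overcounts each off-`S` assignment `d^k` times, so the condition
reads exactly as below.) -/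
def IsUniform (N d k : ℕ) [NeZero d] (Φ : (Fin N → ZMod d) → ℂ) : Prop :=
  ∀ S : Finset (Fin N), S.card = k →
    ∀ f g : Fin N → ZMod d,
      ∑ h : Fin N → ZMod d, Φ (mergeOn S f h) * star (Φ (mergeOn S g h)) =
        if ∀ t ∈ S, f t = g t then ∑ x : Fin N → ZMod d, Φ x * star (Φ x) else 0

theorem sum_pi_succ {α M : Type*} [Fintype α] [AddCommMonoid M] {n : ℕ} (F : (Fin (n+1) → α) → M) :
    ∑ h : Fin (n+1) → α, F h = ∑ a : α, ∑ h : Fin n → α, F (Fin.cons a h) := by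
  rw [← (Fin.consEquiv (fun _ : Fin (n+1) => α)).sum_comp F, Fintype.sum_prod_type]
  rfl

theorem sum_pi_zero {α M : Type*} [Fintype α] [AddCommMonoid M] (F : (Fin 0 → α) → M) :
    ∑ h : Fin 0 → α, F h = F ![] := by
  rw [Fintype.sum_unique]; congr 1

theorem sum5 {d : ℕ} [NeZero d] (F : (Fin 5 → ZMod d) → ℂ) :
    ∑ h : Fin 5 → ZMod d, F h =
      ∑ a : ZMod d, ∑ b : ZMod d, ∑ c : ZMod d, ∑ e : ZMod d, ∑ k : ZMod d, F ![a,b,c,e,k] := by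
  rw [sum_pi_succ]
  congr 1; funext a; rw [sum_pi_succ]
  congr 1; funext b; rw [sum_pi_succ]
  congr 1; funext c; rw [sum_pi_succ]
  congr 1; funext e; rw [sum_pi_succ]
  congr 1; funext k; rw [sum_pi_zero]; rfl

theorem ameProdIte (P Q : Prop) [Decidable P] [Decidable Q] (u v : ℂ) :
    (if P then u else 0) * star (if Q then v else 0) = if P ∧ Q then u * star v else 0 := by
  split_ifs with h1 h2 h3 <;> simp_all

theorem eqc {d : ℕ} (x y z : ZMod d) : (x = y + z) = (y = x - z) := by
  apply propext; constructor <;> intro h <;> rw [h] <;> ring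

theorem eqc2 {d : ℕ} (x y z : ZMod d) : (x = y - z) = (y = x + z) := by
  apply propext; constructor <;> intro h <;> rw [h] <;> ring

theorem solve2 {d : ℕ} (x y z : ZMod d) : (x = y + z) = (z = x - y) := by
  apply propext; constructor <;> intro h <;> rw [h] <;> ring

section
variable {d : ℕ} [NeZero d] {ω : ℂ} (hω : ω = Complex.exp (2 * Real.pi * Complex.I / d))
include hω

theorem chi_prim : IsPrimitiveRoot ω d := by
  rw [hω]; exact Complex.isPrimitiveRoot_exp d (NeZero.ne d)

theorem chi_pow_d : ω ^ d = 1 := (chi_prim hω).pow_eq_one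

theorem chi_ne : ω ≠ 0 := by
  intro h
  have := chi_pow_d hω
  rw [h, zero_pow (NeZero.ne d)] at this
  exact zero_ne_one this

theorem chi_mod (n : ℕ) : ω ^ (n % d) = ω ^ n := by
  conv_rhs => rw [← Nat.div_add_mod n d, pow_add, pow_mul, chi_pow_d hω, one_pow, one_mul]

theorem chi_add (a b : ZMod d) : ω ^ (a + b).val = ω ^ a.val * ω ^ b.val := by
  rw [ZMod.val_add, chi_mod hω, pow_add]

set_option linter.unusedSectionVars false in
theorem chi_star (a : ZMod d) : star (ω ^ a.val) = (ω ^ a.val)⁻¹ := by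
  rw [hω, ← Complex.exp_nat_mul, Complex.star_def, ← Complex.exp_conj, ← Complex.exp_neg]
  congr 1
  simp only [map_mul, map_div₀, Complex.conj_I, map_natCast, map_ofNat, Complex.conj_ofReal]
  ring

theorem chi_mul_star (a b : ZMod d) : ω ^ a.val * star (ω ^ b.val) = ω ^ (a - b).val := by
  rw [chi_star hω]
  have h2 : ω ^ (a - b).val * ω ^ b.val = ω ^ a.val := by
    rw [← chi_add hω, sub_add_cancel]
  field_simp [pow_ne_zero _ (chi_ne hω), ← h2]
  linear_combination -h2

theorem chi_one_iff (c : ZMod d) : ω ^ c.val = 1 ↔ c = 0 := by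
  rw [(chi_prim hω).pow_eq_one_iff_dvd]
  constructor
  · intro h
    exact (ZMod.val_eq_zero c).mp (Nat.eq_zero_of_dvd_of_lt h (ZMod.val_lt c))
  · rintro rfl; simp

theorem chi_sum (c : ZMod d) : ∑ l : ZMod d, ω ^ ((c * l).val) = if c = 0 then (d:ℂ) else 0 := by
  have key : ∀ l : ZMod d, ω ^ ((c * l).val) = (ω ^ c.val) ^ l.val := by
    intro l
    rw [← pow_mul, ZMod.val_mul, chi_mod hω]
  simp_rw [key]
  rw [show ∑ l : ZMod d, (ω ^ c.val) ^ l.val = ∑ n ∈ range d, (ω ^ c.val) ^ n from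
    Finset.sum_nbij' (fun l => l.val) (fun n => (n : ZMod d))
      (fun l _ => mem_range.mpr (ZMod.val_lt l)) (fun n _ => mem_univ _)
      (fun l _ => by simp [ZMod.natCast_val, ZMod.cast_id])
      (fun n hn => ZMod.val_cast_of_lt (mem_range.mp hn))
      (fun l _ => rfl)]
  by_cases hc : c = 0
  · simp [hc]
  · rw [if_neg hc]
    have hz : ω ^ c.val ≠ 1 := fun h => hc ((chi_one_iff hω c).mp h)
    rw [geom_sum_eq hz, ← pow_mul, mul_comm c.val d, pow_mul, chi_pow_d hω, one_pow,
      sub_self, zero_div]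

theorem chi_sum_shift (c u : ZMod d) :
    ∑ l : ZMod d, ω ^ ((c * (l - u)).val) = if c = 0 then (d:ℂ) else 0 := by
  rw [← Equiv.sum_comp (Equiv.addRight u) (fun l => ω ^ ((c * (l - u)).val))]
  simp only [Equiv.coe_addRight, add_sub_cancel_right]
  exact chi_sum hω c

theorem chi_sum_left (c : ZMod d) : ∑ l : ZMod d, ω ^ ((l * c).val) = if c = 0 then (d:ℂ) else 0 := by
  simp_rw [mul_comm]
  exact chi_sum hω c

variable (Φ : (Fin 5 → ZMod d) → ℂ)
  (hΦ : ∀ x, Φ x =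
      if x 2 = x 0 + x 1 ∧ x 3 = x 4 + x 1 then ω ^ ((x 0 * x 4 : ZMod d).val) else 0)
include hΦ

theorem norm_val : ∑ x : Fin 5 → ZMod d, Φ x * star (Φ x) = (d:ℂ)^3 := by
  rw [sum5]
  simp only [hΦ, Matrix.cons_val_zero, Matrix.cons_val_one, Matrix.cons_val_two,
    Matrix.cons_val_three, Matrix.cons_val_four, Matrix.head_cons, Matrix.tail_cons]
  simp only [ameProdIte, and_self, chi_mul_star hω, sub_self, ZMod.val_zero, pow_zero]
  simp only [eqc, ite_and]
  simp [Finset.sum_ite_irrel, Finset.sum_ite_eq', ZMod.card, Finset.sum_const]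
  simp [eqc2, Finset.sum_ite_eq', ZMod.card, Finset.sum_const]
  ring

end

/-- For every d ≥ 2, the unnormalized 5-qudit vector
Φ = Σ_{i,j} |i⟩|j⟩|i+j⟩ ⊗ φ_{i,j} with φ_{i,j} = Σ_l ω^{il} |l+j⟩|l⟩
is 2-uniform, i.e. an AME(5,d) state. -/
theorem stmt3 (d : ℕ) [NeZero d] (hd : 2 ≤ d)
    (ω : ℂ) (hω : ω = Complex.exp (2 * Real.pi * Complex.I / d))
    (Φ : (Fin 5 → ZMod d) → ℂ)
    (hΦ : ∀ x, Φ x =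
      if x 2 = x 0 + x 1 ∧ x 3 = x 4 + x 1 then ω ^ ((x 0 * x 4 : ZMod d).val) else 0) :
    IsUniform 5 d 2 Φ := by
  intro S hS f g
  rw [norm_val hω Φ hΦ]
  have hcases : ∀ S : Finset (Fin 5), S.card = 2 →
      S = {0,1} ∨ S = {0,2} ∨ S = {0,3} ∨ S = {0,4} ∨ S = {1,2} ∨
      S = {1,3} ∨ S = {1,4} ∨ S = {2,3} ∨ S = {2,4} ∨ S = {3,4} := by decide
  rcases hcases S hS with rfl | rfl | rfl | rfl | rfl | rfl | rfl | rfl | rfl | rfl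
  · -- S = {0,1}
    have hm : ∀ (f : Fin 5 → ZMod d) (a b c e k : ZMod d),
        mergeOn {0,1} f ![a,b,c,e,k] = ![f 0, f 1, c, e, k] := by
      intro f a b c e k; funext t; fin_cases t <;> rfl
    have hRHS : (∀ t ∈ ({0,1} : Finset (Fin 5)), f t = g t) ↔ (f 0 = g 0 ∧ f 1 = g 1) := by
      constructor
      · intro h; exact ⟨h 0 (by decide), h 1 (by decide)⟩
      · rintro ⟨h0, h1⟩ t ht; fin_cases ht <;> assumption
    rw [sum5]
    simp only [hm, hΦ, Matrix.cons_val_zero, Matrix.cons_val_one, Matrix.cons_val_two,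
      Matrix.cons_val_three, Matrix.cons_val_four, Matrix.head_cons, Matrix.tail_cons,
      ameProdIte, chi_mul_star hω, hRHS]
    by_cases hfg : f 0 = g 0 ∧ f 1 = g 1
    · obtain ⟨h0, h1⟩ := hfg
      rw [if_pos ⟨h0, h1⟩, ← h0, ← h1]
      simp only [and_self, sub_self, ZMod.val_zero, pow_zero]
      simp only [eqc, ite_and]
      simp [Finset.sum_ite_irrel, Finset.sum_ite_eq', ZMod.card, Finset.sum_const]
      try simp [eqc2, Finset.sum_ite_irrel, Finset.sum_ite_eq', ZMod.card, Finset.sum_const]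
      try simp [solve2, Finset.sum_ite_irrel, Finset.sum_ite_eq', ZMod.card, Finset.sum_const]
      try ring
    · rw [if_neg hfg]
      refine Finset.sum_eq_zero fun a _ => Finset.sum_eq_zero fun b _ =>
        Finset.sum_eq_zero fun c _ => Finset.sum_eq_zero fun e _ =>
        Finset.sum_eq_zero fun k _ => ?_
      rw [if_neg]
      rintro ⟨⟨hc1, he1⟩, hc2, he2⟩
      have h1 : f 1 = g 1 := add_left_cancel (he1.symm.trans he2)
      have h0 : f 0 = g 0 := by
        have := hc1.symm.trans hc2
        rw [h1] at this
        exact add_right_cancel this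
      exact hfg ⟨h0, h1⟩
  · -- S = {0,2}
    have hm : ∀ (f : Fin 5 → ZMod d) (a b c e k : ZMod d),
        mergeOn {0,2} f ![a,b,c,e,k] = ![f 0, b, f 2, e, k] := by
      intro f a b c e k; funext t; fin_cases t <;> rfl
    have hRHS : (∀ t ∈ ({0,2} : Finset (Fin 5)), f t = g t) ↔ (f 0 = g 0 ∧ f 2 = g 2) := by
      constructor
      · intro h; exact ⟨h 0 (by decide), h 2 (by decide)⟩
      · rintro ⟨h0, h1⟩ t ht; fin_cases ht <;> assumption
    rw [sum5]
    simp only [hm, hΦ, Matrix.cons_val_zero, Matrix.cons_val_one, Matrix.cons_val_two,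
      Matrix.cons_val_three, Matrix.cons_val_four, Matrix.head_cons, Matrix.tail_cons,
      ameProdIte, chi_mul_star hω, hRHS]
    by_cases hfg : f 0 = g 0 ∧ f 2 = g 2
    · obtain ⟨h0, h1⟩ := hfg
      rw [if_pos ⟨h0, h1⟩, ← h0, ← h1]
      simp only [and_self, sub_self, ZMod.val_zero, pow_zero]
      simp only [eqc, ite_and]
      simp [Finset.sum_ite_irrel, Finset.sum_ite_eq', ZMod.card, Finset.sum_const]
      try simp [eqc2, Finset.sum_ite_irrel, Finset.sum_ite_eq', ZMod.card, Finset.sum_const]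
      try simp [solve2, Finset.sum_ite_irrel, Finset.sum_ite_eq', ZMod.card, Finset.sum_const]
      try ring
    · rw [if_neg hfg]
      by_cases h02 : f 2 - f 0 = g 2 - g 0
      · have hne : f 0 - g 0 ≠ 0 := by
          intro h
          apply hfg
          have h0 : f 0 = g 0 := sub_eq_zero.mp h
          have h' := h02
          rw [h0] at h'
          exact ⟨h0, sub_left_inj.mp h'⟩
        simp only [solve2 (f 2) (f 0), solve2 (g 2) (g 0), eqc, ite_and]
        simp [Finset.sum_ite_irrel, Finset.sum_ite_eq', ZMod.card, Finset.sum_const, h02,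
          ← sub_mul, chi_sum_shift hω, hne]
      · refine Finset.sum_eq_zero fun a _ => Finset.sum_eq_zero fun b _ =>
          Finset.sum_eq_zero fun c _ => Finset.sum_eq_zero fun e _ =>
          Finset.sum_eq_zero fun k _ => ?_
        rw [if_neg]
        rintro ⟨⟨hc1, he1⟩, hc2, he2⟩
        exact h02 (by rw [hc1, hc2]; ring)
  · -- S = {0,3}
    have hm : ∀ (f : Fin 5 → ZMod d) (a b c e k : ZMod d),
        mergeOn {0,3} f ![a,b,c,e,k] = ![f 0, b, c, f 3, k] := by
      intro f a b c e k; funext t; fin_cases t <;> rfl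
    have hRHS : (∀ t ∈ ({0,3} : Finset (Fin 5)), f t = g t) ↔ (f 0 = g 0 ∧ f 3 = g 3) := by
      constructor
      · intro h; exact ⟨h 0 (by decide), h 3 (by decide)⟩
      · rintro ⟨h0, h1⟩ t ht; fin_cases ht <;> assumption
    rw [sum5]
    simp only [hm, hΦ, Matrix.cons_val_zero, Matrix.cons_val_one, Matrix.cons_val_two,
      Matrix.cons_val_three, Matrix.cons_val_four, Matrix.head_cons, Matrix.tail_cons,
      ameProdIte, chi_mul_star hω, hRHS]
    by_cases hfg : f 0 = g 0 ∧ f 3 = g 3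
    · obtain ⟨h0, h1⟩ := hfg
      rw [if_pos ⟨h0, h1⟩, ← h0, ← h1]
      simp only [and_self, sub_self, ZMod.val_zero, pow_zero]
      simp only [eqc, ite_and]
      simp [Finset.sum_ite_irrel, Finset.sum_ite_eq', ZMod.card, Finset.sum_const]
      try simp [eqc2, Finset.sum_ite_irrel, Finset.sum_ite_eq', ZMod.card, Finset.sum_const]
      try simp [solve2, Finset.sum_ite_irrel, Finset.sum_ite_eq', ZMod.card, Finset.sum_const]
      try ring
    · rw [if_neg hfg]
      refine Finset.sum_eq_zero fun a _ => Finset.sum_eq_zero fun b _ =>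
        Finset.sum_eq_zero fun c _ => Finset.sum_eq_zero fun e _ =>
        Finset.sum_eq_zero fun k _ => ?_
      rw [if_neg]
      rintro ⟨⟨hc1, he1⟩, hc2, he2⟩
      have h0 : f 0 = g 0 := add_right_cancel (hc1.symm.trans hc2)
      exact hfg ⟨h0, he1.trans he2.symm⟩
  · -- S = {0,4}
    have hm : ∀ (f : Fin 5 → ZMod d) (a b c e k : ZMod d),
        mergeOn {0,4} f ![a,b,c,e,k] = ![f 0, b, c, e, f 4] := by
      intro f a b c e k; funext t; fin_cases t <;> rfl
    have hRHS : (∀ t ∈ ({0,4} : Finset (Fin 5)), f t = g t) ↔ (f 0 = g 0 ∧ f 4 = g 4) := by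
      constructor
      · intro h; exact ⟨h 0 (by decide), h 4 (by decide)⟩
      · rintro ⟨h0, h1⟩ t ht; fin_cases ht <;> assumption
    rw [sum5]
    simp only [hm, hΦ, Matrix.cons_val_zero, Matrix.cons_val_one, Matrix.cons_val_two,
      Matrix.cons_val_three, Matrix.cons_val_four, Matrix.head_cons, Matrix.tail_cons,
      ameProdIte, chi_mul_star hω, hRHS]
    by_cases hfg : f 0 = g 0 ∧ f 4 = g 4
    · obtain ⟨h0, h1⟩ := hfg
      rw [if_pos ⟨h0, h1⟩, ← h0, ← h1]
      simp only [and_self, sub_self, ZMod.val_zero, pow_zero]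
      simp only [eqc, ite_and]
      simp [Finset.sum_ite_irrel, Finset.sum_ite_eq', ZMod.card, Finset.sum_const]
      try simp [eqc2, Finset.sum_ite_irrel, Finset.sum_ite_eq', ZMod.card, Finset.sum_const]
      try simp [solve2, Finset.sum_ite_irrel, Finset.sum_ite_eq', ZMod.card, Finset.sum_const]
      try ring
    · rw [if_neg hfg]
      refine Finset.sum_eq_zero fun a _ => Finset.sum_eq_zero fun b _ =>
        Finset.sum_eq_zero fun c _ => Finset.sum_eq_zero fun e _ =>
        Finset.sum_eq_zero fun k _ => ?_
      rw [if_neg]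
      rintro ⟨⟨hc1, he1⟩, hc2, he2⟩
      have h0 : f 0 = g 0 := add_right_cancel (hc1.symm.trans hc2)
      have h4 : f 4 = g 4 := add_right_cancel (he1.symm.trans he2)
      exact hfg ⟨h0, h4⟩
  · -- S = {1,2}
    have hm : ∀ (f : Fin 5 → ZMod d) (a b c e k : ZMod d),
        mergeOn {1,2} f ![a,b,c,e,k] = ![a, f 1, f 2, e, k] := by
      intro f a b c e k; funext t; fin_cases t <;> rfl
    have hRHS : (∀ t ∈ ({1,2} : Finset (Fin 5)), f t = g t) ↔ (f 1 = g 1 ∧ f 2 = g 2) := by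
      constructor
      · intro h; exact ⟨h 1 (by decide), h 2 (by decide)⟩
      · rintro ⟨h0, h1⟩ t ht; fin_cases ht <;> assumption
    rw [sum5]
    simp only [hm, hΦ, Matrix.cons_val_zero, Matrix.cons_val_one, Matrix.cons_val_two,
      Matrix.cons_val_three, Matrix.cons_val_four, Matrix.head_cons, Matrix.tail_cons,
      ameProdIte, chi_mul_star hω, hRHS]
    by_cases hfg : f 1 = g 1 ∧ f 2 = g 2
    · obtain ⟨h0, h1⟩ := hfg
      rw [if_pos ⟨h0, h1⟩, ← h0, ← h1]
      simp only [and_self, sub_self, ZMod.val_zero, pow_zero]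
      simp only [eqc, ite_and]
      simp [Finset.sum_ite_irrel, Finset.sum_ite_eq', ZMod.card, Finset.sum_const]
      try simp [eqc2, Finset.sum_ite_irrel, Finset.sum_ite_eq', ZMod.card, Finset.sum_const]
      try simp [solve2, Finset.sum_ite_irrel, Finset.sum_ite_eq', ZMod.card, Finset.sum_const]
      try ring
    · rw [if_neg hfg]
      refine Finset.sum_eq_zero fun a _ => Finset.sum_eq_zero fun b _ =>
        Finset.sum_eq_zero fun c _ => Finset.sum_eq_zero fun e _ =>
        Finset.sum_eq_zero fun k _ => ?_
      rw [if_neg]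
      rintro ⟨⟨hc1, he1⟩, hc2, he2⟩
      have h1 : f 1 = g 1 := add_left_cancel (he1.symm.trans he2)
      have h2 : f 2 = g 2 := by rw [hc1, hc2, h1]
      exact hfg ⟨h1, h2⟩
  · -- S = {1,3}
    have hm : ∀ (f : Fin 5 → ZMod d) (a b c e k : ZMod d),
        mergeOn {1,3} f ![a,b,c,e,k] = ![a, f 1, c, f 3, k] := by
      intro f a b c e k; funext t; fin_cases t <;> rfl
    have hRHS : (∀ t ∈ ({1,3} : Finset (Fin 5)), f t = g t) ↔ (f 1 = g 1 ∧ f 3 = g 3) := by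
      constructor
      · intro h; exact ⟨h 1 (by decide), h 3 (by decide)⟩
      · rintro ⟨h0, h1⟩ t ht; fin_cases ht <;> assumption
    rw [sum5]
    simp only [hm, hΦ, Matrix.cons_val_zero, Matrix.cons_val_one, Matrix.cons_val_two,
      Matrix.cons_val_three, Matrix.cons_val_four, Matrix.head_cons, Matrix.tail_cons,
      ameProdIte, chi_mul_star hω, hRHS]
    by_cases hfg : f 1 = g 1 ∧ f 3 = g 3
    · obtain ⟨h0, h1⟩ := hfg
      rw [if_pos ⟨h0, h1⟩, ← h0, ← h1]
      simp only [and_self, sub_self, ZMod.val_zero, pow_zero]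
      simp only [eqc, ite_and]
      simp [Finset.sum_ite_irrel, Finset.sum_ite_eq', ZMod.card, Finset.sum_const]
      try simp [eqc2, Finset.sum_ite_irrel, Finset.sum_ite_eq', ZMod.card, Finset.sum_const]
      try simp [solve2, Finset.sum_ite_irrel, Finset.sum_ite_eq', ZMod.card, Finset.sum_const]
      try ring
    · rw [if_neg hfg]
      refine Finset.sum_eq_zero fun a _ => Finset.sum_eq_zero fun b _ =>
        Finset.sum_eq_zero fun c _ => Finset.sum_eq_zero fun e _ =>
        Finset.sum_eq_zero fun k _ => ?_
      rw [if_neg]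
      rintro ⟨⟨hc1, he1⟩, hc2, he2⟩
      have h1 : f 1 = g 1 := add_left_cancel (hc1.symm.trans hc2)
      have h3 : f 3 = g 3 := by rw [he1, he2, h1]
      exact hfg ⟨h1, h3⟩
  · -- S = {1,4}
    have hm : ∀ (f : Fin 5 → ZMod d) (a b c e k : ZMod d),
        mergeOn {1,4} f ![a,b,c,e,k] = ![a, f 1, c, e, f 4] := by
      intro f a b c e k; funext t; fin_cases t <;> rfl
    have hRHS : (∀ t ∈ ({1,4} : Finset (Fin 5)), f t = g t) ↔ (f 1 = g 1 ∧ f 4 = g 4) := by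
      constructor
      · intro h; exact ⟨h 1 (by decide), h 4 (by decide)⟩
      · rintro ⟨h0, h1⟩ t ht; fin_cases ht <;> assumption
    rw [sum5]
    simp only [hm, hΦ, Matrix.cons_val_zero, Matrix.cons_val_one, Matrix.cons_val_two,
      Matrix.cons_val_three, Matrix.cons_val_four, Matrix.head_cons, Matrix.tail_cons,
      ameProdIte, chi_mul_star hω, hRHS]
    by_cases hfg : f 1 = g 1 ∧ f 4 = g 4
    · obtain ⟨h0, h1⟩ := hfg
      rw [if_pos ⟨h0, h1⟩, ← h0, ← h1]
      simp only [and_self, sub_self, ZMod.val_zero, pow_zero]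
      simp only [eqc, ite_and]
      simp [Finset.sum_ite_irrel, Finset.sum_ite_eq', ZMod.card, Finset.sum_const]
      try simp [eqc2, Finset.sum_ite_irrel, Finset.sum_ite_eq', ZMod.card, Finset.sum_const]
      try simp [solve2, Finset.sum_ite_irrel, Finset.sum_ite_eq', ZMod.card, Finset.sum_const]
      try ring
    · rw [if_neg hfg]
      refine Finset.sum_eq_zero fun a _ => Finset.sum_eq_zero fun b _ =>
        Finset.sum_eq_zero fun c _ => Finset.sum_eq_zero fun e _ =>
        Finset.sum_eq_zero fun k _ => ?_
      rw [if_neg]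
      rintro ⟨⟨hc1, he1⟩, hc2, he2⟩
      have h1 : f 1 = g 1 := add_left_cancel (hc1.symm.trans hc2)
      have h4 : f 4 = g 4 := by
        have := he1.symm.trans he2
        rw [h1] at this
        exact add_right_cancel this
      exact hfg ⟨h1, h4⟩
  · -- S = {2,3}
    have hm : ∀ (f : Fin 5 → ZMod d) (a b c e k : ZMod d),
        mergeOn {2,3} f ![a,b,c,e,k] = ![a, b, f 2, f 3, k] := by
      intro f a b c e k; funext t; fin_cases t <;> rfl
    have hRHS : (∀ t ∈ ({2,3} : Finset (Fin 5)), f t = g t) ↔ (f 2 = g 2 ∧ f 3 = g 3) := by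
      constructor
      · intro h; exact ⟨h 2 (by decide), h 3 (by decide)⟩
      · rintro ⟨h0, h1⟩ t ht; fin_cases ht <;> assumption
    rw [sum5]
    simp only [hm, hΦ, Matrix.cons_val_zero, Matrix.cons_val_one, Matrix.cons_val_two,
      Matrix.cons_val_three, Matrix.cons_val_four, Matrix.head_cons, Matrix.tail_cons,
      ameProdIte, chi_mul_star hω, hRHS]
    by_cases hfg : f 2 = g 2 ∧ f 3 = g 3
    · obtain ⟨h0, h1⟩ := hfg
      rw [if_pos ⟨h0, h1⟩, ← h0, ← h1]
      simp only [and_self, sub_self, ZMod.val_zero, pow_zero]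
      simp only [eqc, ite_and]
      simp [Finset.sum_ite_irrel, Finset.sum_ite_eq', ZMod.card, Finset.sum_const]
      try simp [eqc2, Finset.sum_ite_irrel, Finset.sum_ite_eq', ZMod.card, Finset.sum_const]
      try simp [solve2, Finset.sum_ite_irrel, Finset.sum_ite_eq', ZMod.card, Finset.sum_const]
      try ring
    · rw [if_neg hfg]
      refine Finset.sum_eq_zero fun a _ => Finset.sum_eq_zero fun b _ =>
        Finset.sum_eq_zero fun c _ => Finset.sum_eq_zero fun e _ =>
        Finset.sum_eq_zero fun k _ => ?_
      rw [if_neg]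
      rintro ⟨⟨hc1, he1⟩, hc2, he2⟩
      exact hfg ⟨hc1.trans hc2.symm, he1.trans he2.symm⟩
  · -- S = {2,4}
    have hm : ∀ (f : Fin 5 → ZMod d) (a b c e k : ZMod d),
        mergeOn {2,4} f ![a,b,c,e,k] = ![a, b, f 2, e, f 4] := by
      intro f a b c e k; funext t; fin_cases t <;> rfl
    have hRHS : (∀ t ∈ ({2,4} : Finset (Fin 5)), f t = g t) ↔ (f 2 = g 2 ∧ f 4 = g 4) := by
      constructor
      · intro h; exact ⟨h 2 (by decide), h 4 (by decide)⟩
      · rintro ⟨h0, h1⟩ t ht; fin_cases ht <;> assumption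
    rw [sum5]
    simp only [hm, hΦ, Matrix.cons_val_zero, Matrix.cons_val_one, Matrix.cons_val_two,
      Matrix.cons_val_three, Matrix.cons_val_four, Matrix.head_cons, Matrix.tail_cons,
      ameProdIte, chi_mul_star hω, hRHS]
    by_cases hfg : f 2 = g 2 ∧ f 4 = g 4
    · obtain ⟨h0, h1⟩ := hfg
      rw [if_pos ⟨h0, h1⟩, ← h0, ← h1]
      simp only [and_self, sub_self, ZMod.val_zero, pow_zero]
      simp only [eqc, ite_and]
      simp [Finset.sum_ite_irrel, Finset.sum_ite_eq', ZMod.card, Finset.sum_const]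
      try simp [eqc2, Finset.sum_ite_irrel, Finset.sum_ite_eq', ZMod.card, Finset.sum_const]
      try simp [solve2, Finset.sum_ite_irrel, Finset.sum_ite_eq', ZMod.card, Finset.sum_const]
      try ring
    · rw [if_neg hfg]
      refine Finset.sum_eq_zero fun a _ => Finset.sum_eq_zero fun b _ =>
        Finset.sum_eq_zero fun c _ => Finset.sum_eq_zero fun e _ =>
        Finset.sum_eq_zero fun k _ => ?_
      rw [if_neg]
      rintro ⟨⟨hc1, he1⟩, hc2, he2⟩
      have h4 : f 4 = g 4 := add_right_cancel (he1.symm.trans he2)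
      exact hfg ⟨hc1.trans hc2.symm, h4⟩
  · -- S = {3,4}
    have hm : ∀ (f : Fin 5 → ZMod d) (a b c e k : ZMod d),
        mergeOn {3,4} f ![a,b,c,e,k] = ![a, b, c, f 3, f 4] := by
      intro f a b c e k; funext t; fin_cases t <;> rfl
    have hRHS : (∀ t ∈ ({3,4} : Finset (Fin 5)), f t = g t) ↔ (f 3 = g 3 ∧ f 4 = g 4) := by
      constructor
      · intro h; exact ⟨h 3 (by decide), h 4 (by decide)⟩
      · rintro ⟨h0, h1⟩ t ht; fin_cases ht <;> assumption
    rw [sum5]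
    simp only [hm, hΦ, Matrix.cons_val_zero, Matrix.cons_val_one, Matrix.cons_val_two,
      Matrix.cons_val_three, Matrix.cons_val_four, Matrix.head_cons, Matrix.tail_cons,
      ameProdIte, chi_mul_star hω, hRHS]
    by_cases hfg : f 3 = g 3 ∧ f 4 = g 4
    · obtain ⟨h0, h1⟩ := hfg
      rw [if_pos ⟨h0, h1⟩, ← h0, ← h1]
      simp only [and_self, sub_self, ZMod.val_zero, pow_zero]
      simp only [eqc, ite_and]
      simp [Finset.sum_ite_irrel, Finset.sum_ite_eq', ZMod.card, Finset.sum_const]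
      try simp [eqc2, Finset.sum_ite_irrel, Finset.sum_ite_eq', ZMod.card, Finset.sum_const]
      try simp [solve2, Finset.sum_ite_irrel, Finset.sum_ite_eq', ZMod.card, Finset.sum_const]
      try ring
    · rw [if_neg hfg]
      by_cases h34 : f 3 - f 4 = g 3 - g 4
      · have hne : f 4 - g 4 ≠ 0 := by
          intro h
          apply hfg
          have h4 : f 4 = g 4 := sub_eq_zero.mp h
          have h' := h34
          rw [h4] at h'
          exact ⟨sub_left_inj.mp h', h4⟩
        simp only [solve2 (f 3) (f 4), solve2 (g 3) (g 4), ite_and]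
        simp [Finset.sum_ite_irrel, Finset.sum_ite_eq', ZMod.card, Finset.sum_const, h34,
          ← mul_sub, chi_sum_left hω, hne]
        try simp [← Finset.mul_sum, chi_sum_left hω, hne]
      · refine Finset.sum_eq_zero fun a _ => Finset.sum_eq_zero fun b _ =>
          Finset.sum_eq_zero fun c _ => Finset.sum_eq_zero fun e _ =>
          Finset.sum_eq_zero fun k _ => ?_
        rw [if_neg]
        rintro ⟨⟨hc1, he1⟩, hc2, he2⟩
        exact h34 (by rw [he1, he2]; ring)
end

section
/- Let U be a unitary matrix on ℂ^d ⊗ ℂ^d. If both the partial transpose U^{T₂} and the reshuffling U^R of U are unitary (U is 2-unitary), then the unnormalized vector |Φ⟩ = Σ_{n,m=0}^{d−1} |n,m⟩ ⊗ U(|n,m⟩) ∈ (ℂ^d)^{⊗4} is 2-uniform, i.e., the normalized state has all six two-party reductions equal to I_{d²}/d² (it is an AME(4,d) state). -/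
open Finset

/-- Partial transpose of a matrix on ℂ^d ⊗ ℂ^d:
(U^{T₂})_{(n,μ),(ν,m)} = U_{(n,m),(ν,μ)}. -/
def ptranspose {d : ℕ} (U : Matrix (ZMod d × ZMod d) (ZMod d × ZMod d) ℂ) :
    Matrix (ZMod d × ZMod d) (ZMod d × ZMod d) ℂ :=
  fun p q => U (p.1, q.2) (q.1, p.2)

/-- Reshuffling of a matrix on ℂ^d ⊗ ℂ^d:
(U^R)_{(n,ν),(m,μ)} = U_{(n,m),(ν,μ)}. -/
def reshuffle {d : ℕ} (U : Matrix (ZMod d × ZMod d) (ZMod d × ZMod d) ℂ) :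
    Matrix (ZMod d × ZMod d) (ZMod d × ZMod d) ℂ :=
  fun p q => U (p.1, q.1) (p.2, q.2)

section AuxStmt13
variable {d : ℕ} [NeZero d]

lemma colOrtho {ι : Type*} [Fintype ι] [DecidableEq ι] (A : Matrix ι ι ℂ)
    (h : star A * A = 1) (p q : ι) :
    ∑ r : ι, A r p * (starRingEnd ℂ) (A r q) = if p = q then 1 else 0 := by
  have := congrFun (congrFun h q) p
  simp only [Matrix.mul_apply, Matrix.one_apply, Matrix.star_apply] at this
  rw [show (if p = q then (1:ℂ) else 0) = if q = p then 1 else 0 by simp [eq_comm], ← this]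
  exact Finset.sum_congr rfl fun r _ => mul_comm _ _

lemma rowOrtho {ι : Type*} [Fintype ι] [DecidableEq ι] (A : Matrix ι ι ℂ)
    (h : A * star A = 1) (p q : ι) :
    ∑ r : ι, A p r * (starRingEnd ℂ) (A q r) = if p = q then 1 else 0 := by
  have := congrFun (congrFun h p) q
  simp only [Matrix.mul_apply, Matrix.one_apply, Matrix.star_apply] at this
  exact this

lemma colOrtho2 (A : Matrix (ZMod d × ZMod d) (ZMod d × ZMod d) ℂ)
    (h : star A * A = 1) (p q : ZMod d × ZMod d) :
    ∑ c : ZMod d, ∑ e : ZMod d, A (c, e) p * (starRingEnd ℂ) (A (c, e) q)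
      = if p = q then 1 else 0 := by
  have := colOrtho A h p q
  rwa [Fintype.sum_prod_type] at this

lemma rowOrtho2 (A : Matrix (ZMod d × ZMod d) (ZMod d × ZMod d) ℂ)
    (h : A * star A = 1) (p q : ZMod d × ZMod d) :
    ∑ c : ZMod d, ∑ e : ZMod d, A p (c, e) * (starRingEnd ℂ) (A q (c, e))
      = if p = q then 1 else 0 := by
  have := rowOrtho A h p q
  rwa [Fintype.sum_prod_type] at this

section equivs
def e01 : (ZMod d × ZMod d × ZMod d × ZMod d) ≃ (Fin 4 → ZMod d) where
  toFun p := ![p.1, p.2.1, p.2.2.1, p.2.2.2]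
  invFun h := (h 0, h 1, h 2, h 3)
  left_inv p := rfl
  right_inv h := by funext i; fin_cases i <;> rfl

def e23 : (ZMod d × ZMod d × ZMod d × ZMod d) ≃ (Fin 4 → ZMod d) where
  toFun p := ![p.2.2.1, p.2.2.2, p.1, p.2.1]
  invFun h := (h 2, h 3, h 0, h 1)
  left_inv p := rfl
  right_inv h := by funext i; fin_cases i <;> rfl

def e02 : (ZMod d × ZMod d × ZMod d × ZMod d) ≃ (Fin 4 → ZMod d) where
  toFun p := ![p.1, p.2.2.2, p.2.1, p.2.2.1]
  invFun h := (h 0, h 2, h 3, h 1)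
  left_inv p := rfl
  right_inv h := by funext i; fin_cases i <;> rfl

def e13 : (ZMod d × ZMod d × ZMod d × ZMod d) ≃ (Fin 4 → ZMod d) where
  toFun p := ![p.2.2.2, p.1, p.2.2.1, p.2.1]
  invFun h := (h 1, h 3, h 2, h 0)
  left_inv p := rfl
  right_inv h := by funext i; fin_cases i <;> rfl

def e03 : (ZMod d × ZMod d × ZMod d × ZMod d) ≃ (Fin 4 → ZMod d) where
  toFun p := ![p.1, p.2.2.2, p.2.2.1, p.2.1]
  invFun h := (h 0, h 3, h 2, h 1)
  left_inv p := rfl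
  right_inv h := by funext i; fin_cases i <;> rfl

def e12 : (ZMod d × ZMod d × ZMod d × ZMod d) ≃ (Fin 4 → ZMod d) where
  toFun p := ![p.2.2.1, p.1, p.2.1, p.2.2.2]
  invFun h := (h 1, h 2, h 0, h 3)
  left_inv p := rfl
  right_inv h := by funext i; fin_cases i <;> rfl
end equivs

lemma sum_fin4_01 (F : (Fin 4 → ZMod d) → ℂ) :
    ∑ h : Fin 4 → ZMod d, F h
      = ∑ a : ZMod d, ∑ b : ZMod d, ∑ c : ZMod d, ∑ e : ZMod d, F ![a, b, c, e] := by
  rw [← Equiv.sum_comp (e01 (d := d)) F, Fintype.sum_prod_type]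
  simp [Fintype.sum_prod_type, e01]
  rfl

lemma sum_fin4_23 (F : (Fin 4 → ZMod d) → ℂ) :
    ∑ h : Fin 4 → ZMod d, F h
      = ∑ c : ZMod d, ∑ e : ZMod d, ∑ a : ZMod d, ∑ b : ZMod d, F ![a, b, c, e] := by
  rw [← Equiv.sum_comp (e23 (d := d)) F, Fintype.sum_prod_type]
  simp [Fintype.sum_prod_type, e23]
  rfl

lemma sum_fin4_02 (F : (Fin 4 → ZMod d) → ℂ) :
    ∑ h : Fin 4 → ZMod d, F h
      = ∑ a : ZMod d, ∑ c : ZMod d, ∑ e : ZMod d, ∑ b : ZMod d, F ![a, b, c, e] := by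
  rw [← Equiv.sum_comp (e02 (d := d)) F, Fintype.sum_prod_type]
  simp [Fintype.sum_prod_type, e02]
  rfl

lemma sum_fin4_13 (F : (Fin 4 → ZMod d) → ℂ) :
    ∑ h : Fin 4 → ZMod d, F h
      = ∑ b : ZMod d, ∑ e : ZMod d, ∑ c : ZMod d, ∑ a : ZMod d, F ![a, b, c, e] := by
  rw [← Equiv.sum_comp (e13 (d := d)) F, Fintype.sum_prod_type]
  simp [Fintype.sum_prod_type, e13]
  rfl

lemma sum_fin4_03 (F : (Fin 4 → ZMod d) → ℂ) :
    ∑ h : Fin 4 → ZMod d, F h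
      = ∑ a : ZMod d, ∑ e : ZMod d, ∑ c : ZMod d, ∑ b : ZMod d, F ![a, b, c, e] := by
  rw [← Equiv.sum_comp (e03 (d := d)) F, Fintype.sum_prod_type]
  simp [Fintype.sum_prod_type, e03]
  rfl

lemma sum_fin4_12 (F : (Fin 4 → ZMod d) → ℂ) :
    ∑ h : Fin 4 → ZMod d, F h
      = ∑ b : ZMod d, ∑ c : ZMod d, ∑ a : ZMod d, ∑ e : ZMod d, F ![a, b, c, e] := by
  rw [← Equiv.sum_comp (e12 (d := d)) F, Fintype.sum_prod_type]
  simp [Fintype.sum_prod_type, e12]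
  rfl

lemma htot (U : Matrix (ZMod d × ZMod d) (ZMod d × ZMod d) ℂ)
    (hU' : star U * U = 1)
    (Φ : (Fin 4 → ZMod d) → ℂ)
    (hΦ : ∀ x, Φ x = U (x 2, x 3) (x 0, x 1)) :
    ∑ x : Fin 4 → ZMod d, Φ x * star (Φ x) = (d:ℂ)^2 := by
  rw [sum_fin4_01]
  simp only [hΦ]
  simp [colOrtho2 U hU', Finset.card_univ, ZMod.card]
  ring

variable (U : Matrix (ZMod d × ZMod d) (ZMod d × ZMod d) ℂ)
  (Φ : (Fin 4 → ZMod d) → ℂ)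

lemma case01 (hU' : star U * U = 1)
    (hΦ : ∀ x, Φ x = U (x 2, x 3) (x 0, x 1)) (f g : Fin 4 → ZMod d) :
    ∑ h : Fin 4 → ZMod d, Φ (mergeOn {0,1} f h) * star (Φ (mergeOn {0,1} g h)) =
      if ∀ t ∈ ({0,1} : Finset (Fin 4)), f t = g t then
        ∑ x : Fin 4 → ZMod d, Φ x * star (Φ x) else 0 := by
  rw [htot U hU' Φ hΦ, sum_fin4_01]
  simp only [hΦ, mergeOn]
  simp [colOrtho2 U hU', Finset.card_univ, ZMod.card, Prod.mk.injEq]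
  by_cases h1 : f 0 = g 0 <;> by_cases h2 : f 1 = g 1 <;> simp [h1, h2] <;> ring

lemma case23 (hU' : star U * U = 1) (hU'' : U * star U = 1)
    (hΦ : ∀ x, Φ x = U (x 2, x 3) (x 0, x 1)) (f g : Fin 4 → ZMod d) :
    ∑ h : Fin 4 → ZMod d, Φ (mergeOn {2,3} f h) * star (Φ (mergeOn {2,3} g h)) =
      if ∀ t ∈ ({2,3} : Finset (Fin 4)), f t = g t then
        ∑ x : Fin 4 → ZMod d, Φ x * star (Φ x) else 0 := by
  rw [htot U hU' Φ hΦ, sum_fin4_23]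
  simp only [hΦ, mergeOn]
  simp [rowOrtho2 U hU'', Finset.card_univ, ZMod.card, Prod.mk.injEq]
  by_cases h1 : f 2 = g 2 <;> by_cases h2 : f 3 = g 3 <;> simp [h1, h2] <;> ring

lemma case02 (hU' : star U * U = 1) (hR' : reshuffle U * star (reshuffle U) = 1)
    (hΦ : ∀ x, Φ x = U (x 2, x 3) (x 0, x 1)) (f g : Fin 4 → ZMod d) :
    ∑ h : Fin 4 → ZMod d, Φ (mergeOn {0,2} f h) * star (Φ (mergeOn {0,2} g h)) =
      if ∀ t ∈ ({0,2} : Finset (Fin 4)), f t = g t then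
        ∑ x : Fin 4 → ZMod d, Φ x * star (Φ x) else 0 := by
  have key : ∀ p₁ p₂ q₁ q₂ : ZMod d,
      (∑ c : ZMod d, ∑ e : ZMod d, U (p₁, c) (p₂, e) * (starRingEnd ℂ) (U (q₁, c) (q₂, e)))
        = if (p₁, p₂) = (q₁, q₂) then 1 else 0 :=
    fun p₁ p₂ q₁ q₂ => rowOrtho2 (reshuffle U) hR' (p₁, p₂) (q₁, q₂)
  rw [htot U hU' Φ hΦ, sum_fin4_02]
  simp only [hΦ, mergeOn]
  simp [key, Finset.card_univ, ZMod.card, Prod.mk.injEq]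
  by_cases h1 : f 0 = g 0 <;> by_cases h2 : f 2 = g 2 <;> simp [h1, h2] <;> ring

lemma case13 (hU' : star U * U = 1) (hR' : star (reshuffle U) * reshuffle U = 1)
    (hΦ : ∀ x, Φ x = U (x 2, x 3) (x 0, x 1)) (f g : Fin 4 → ZMod d) :
    ∑ h : Fin 4 → ZMod d, Φ (mergeOn {1,3} f h) * star (Φ (mergeOn {1,3} g h)) =
      if ∀ t ∈ ({1,3} : Finset (Fin 4)), f t = g t then
        ∑ x : Fin 4 → ZMod d, Φ x * star (Φ x) else 0 := by
  have key : ∀ p₁ p₂ q₁ q₂ : ZMod d,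
      (∑ c : ZMod d, ∑ e : ZMod d, U (c, p₁) (e, p₂) * (starRingEnd ℂ) (U (c, q₁) (e, q₂)))
        = if (p₁, p₂) = (q₁, q₂) then 1 else 0 :=
    fun p₁ p₂ q₁ q₂ => colOrtho2 (reshuffle U) hR' (p₁, p₂) (q₁, q₂)
  rw [htot U hU' Φ hΦ, sum_fin4_13]
  simp only [hΦ, mergeOn]
  simp [key, Finset.card_univ, ZMod.card, Prod.mk.injEq]
  by_cases h1 : f 1 = g 1 <;> by_cases h2 : f 3 = g 3 <;> simp [h1, h2] <;> ring

lemma case03 (hU' : star U * U = 1) (hT' : star (ptranspose U) * ptranspose U = 1)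
    (hΦ : ∀ x, Φ x = U (x 2, x 3) (x 0, x 1)) (f g : Fin 4 → ZMod d) :
    ∑ h : Fin 4 → ZMod d, Φ (mergeOn {0,3} f h) * star (Φ (mergeOn {0,3} g h)) =
      if ∀ t ∈ ({0,3} : Finset (Fin 4)), f t = g t then
        ∑ x : Fin 4 → ZMod d, Φ x * star (Φ x) else 0 := by
  have key : ∀ p₁ p₂ q₁ q₂ : ZMod d,
      (∑ c : ZMod d, ∑ e : ZMod d, U (c, p₂) (p₁, e) * (starRingEnd ℂ) (U (c, q₂) (q₁, e)))
        = if (p₁, p₂) = (q₁, q₂) then 1 else 0 :=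
    fun p₁ p₂ q₁ q₂ => colOrtho2 (ptranspose U) hT' (p₁, p₂) (q₁, q₂)
  rw [htot U hU' Φ hΦ, sum_fin4_03]
  simp only [hΦ, mergeOn]
  simp [key, Finset.card_univ, ZMod.card, Prod.mk.injEq]
  by_cases h1 : f 0 = g 0 <;> by_cases h2 : f 3 = g 3 <;> simp [h1, h2] <;> ring

lemma case12 (hU' : star U * U = 1) (hT' : ptranspose U * star (ptranspose U) = 1)
    (hΦ : ∀ x, Φ x = U (x 2, x 3) (x 0, x 1)) (f g : Fin 4 → ZMod d) :
    ∑ h : Fin 4 → ZMod d, Φ (mergeOn {1,2} f h) * star (Φ (mergeOn {1,2} g h)) =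
      if ∀ t ∈ ({1,2} : Finset (Fin 4)), f t = g t then
        ∑ x : Fin 4 → ZMod d, Φ x * star (Φ x) else 0 := by
  have key : ∀ p₁ p₂ q₁ q₂ : ZMod d,
      (∑ c : ZMod d, ∑ e : ZMod d, U (p₁, e) (c, p₂) * (starRingEnd ℂ) (U (q₁, e) (c, q₂)))
        = if (p₁, p₂) = (q₁, q₂) then 1 else 0 :=
    fun p₁ p₂ q₁ q₂ => rowOrtho2 (ptranspose U) hT' (p₁, p₂) (q₁, q₂)
  rw [htot U hU' Φ hΦ, sum_fin4_12]
  simp only [hΦ, mergeOn]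
  simp [key, Finset.card_univ, ZMod.card, Prod.mk.injEq]
  by_cases h1 : f 1 = g 1 <;> by_cases h2 : f 2 = g 2 <;> simp [h1, h2] <;> ring

end AuxStmt13

/-- if U is unitary and both U^{T₂} and U^R are unitary
(U is 2-unitary), then Φ = Σ_{n,m} |n,m⟩ ⊗ U|n,m⟩ is a 2-uniform 4-qudit state
(an AME(4,d) state). -/
theorem stmt13 (d : ℕ) [NeZero d]
    (U : Matrix (ZMod d × ZMod d) (ZMod d × ZMod d) ℂ)
    (hU : U ∈ Matrix.unitaryGroup (ZMod d × ZMod d) ℂ)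
    (hT : ptranspose U ∈ Matrix.unitaryGroup (ZMod d × ZMod d) ℂ)
    (hR : reshuffle U ∈ Matrix.unitaryGroup (ZMod d × ZMod d) ℂ)
    (Φ : (Fin 4 → ZMod d) → ℂ)
    (hΦ : ∀ x, Φ x = U (x 2, x 3) (x 0, x 1)) :
    IsUniform 4 d 2 Φ := by
  intro S hS f g
  obtain ⟨i, j, hij, rfl⟩ := Finset.card_eq_two.mp hS
  have hU1 : star U * U = 1 := hU.1
  have hU2 : U * star U = 1 := hU.2
  have hT1 : star (ptranspose U) * ptranspose U = 1 := hT.1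
  have hT2 : ptranspose U * star (ptranspose U) = 1 := hT.2
  have hR1 : star (reshuffle U) * reshuffle U = 1 := hR.1
  have hR2 : reshuffle U * star (reshuffle U) = 1 := hR.2
  fin_cases i <;> fin_cases j
  · exact absurd rfl hij
  · exact case01 U Φ hU1 hΦ f g
  · exact case02 U Φ hU1 hR2 hΦ f g
  · exact case03 U Φ hU1 hT1 hΦ f g
  · rw [Finset.pair_comm]; exact case01 U Φ hU1 hΦ f g
  · exact absurd rfl hij
  · exact case12 U Φ hU1 hT2 hΦ f g
  · exact case13 U Φ hU1 hR1 hΦ f g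
  · rw [Finset.pair_comm]; exact case02 U Φ hU1 hR2 hΦ f g
  · rw [Finset.pair_comm]; exact case12 U Φ hU1 hT2 hΦ f g
  · exact absurd rfl hij
  · exact case23 U Φ hU1 hU2 hΦ f g
  · rw [Finset.pair_comm]; exact case03 U Φ hU1 hT1 hΦ f g
  · rw [Finset.pair_comm]; exact case13 U Φ hU1 hR1 hΦ f g
  · rw [Finset.pair_comm]; exact case23 U Φ hU1 hU2 hΦ f g
  · exact absurd rfl hij
end

section
/- If d ≥ 2 is an integer, the vectors |ψ_{i,j}⟩ = |i+j mod d⟩ ⊗ |φ_{i,j}⟩ ∈ ℂ^d ⊗ (ℂ^d ⊗ ℂ^d), for i,j ∈ ℤ/d with |φ_{i,j}⟩ the normalized generalized Bell states, satisfy: (1) the d² vectors are pairwise orthogonal; (2) for each fixed i, the vector Σ_{j} |j⟩ ⊗ |ψ_{i,j}⟩ ∈ (ℂ^d)^{⊗4} (suitably normalized) has all four single-party reductions maximally mixed; (3) likewise for each fixed j, the vector Σ_i |i⟩ ⊗ |ψ_{i,j}⟩ has all single-party reductions maximally mixed. -/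
open Finset

lemma sum_fin4 {M β : Type*} [Fintype M] [AddCommMonoid β] (F : (Fin 4 → M) → β) :
    ∑ h : Fin 4 → M, F h = ∑ a : M, ∑ b : M, ∑ c : M, ∑ e : M, F ![a,b,c,e] := by
  rw [← (Fin.consEquiv fun _ => M).sum_comp, Fintype.sum_prod_type]
  refine Finset.sum_congr rfl fun a _ => ?_
  rw [← (Fin.consEquiv fun _ => M).sum_comp, Fintype.sum_prod_type]
  refine Finset.sum_congr rfl fun b _ => ?_
  rw [← (Fin.consEquiv fun _ => M).sum_comp, Fintype.sum_prod_type]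
  refine Finset.sum_congr rfl fun c _ => ?_
  rw [← (Fin.consEquiv fun _ => M).sum_comp, Fintype.sum_prod_type]
  refine Finset.sum_congr rfl fun e _ => ?_
  rw [Fintype.sum_unique]
  congr 1

lemma star_ite0 (P : Prop) [Decidable P] (x : ℂ) :
    star (if P then x else 0) = if P then star x else 0 := by split <;> simp

lemma uniform_aux {d : ℕ} [NeZero d] (c₁ : Equiv.Perm (ZMod d)) (c₂ : ZMod d → ZMod d)
    (μ : ZMod d → ZMod d → ℂ) (hμ : ∀ p q, μ p q * star (μ p q) = (d:ℂ)⁻¹) :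
    IsUniform 4 d 1 (fun x =>
      if x 1 = c₁ (x 0) ∧ x 3 = x 2 + c₂ (x 0) then μ (x 0) (x 2) else 0) := by
  have hd0 : (d:ℂ) ≠ 0 := Nat.cast_ne_zero.mpr (NeZero.ne d)
  have hdd : (d:ℂ) * (d:ℂ)⁻¹ = 1 := mul_inv_cancel₀ hd0
  have hN : (∑ x : Fin 4 → ZMod d,
      (if x 1 = c₁ (x 0) ∧ x 3 = x 2 + c₂ (x 0) then μ (x 0) (x 2) else 0) *
      star (if x 1 = c₁ (x 0) ∧ x 3 = x 2 + c₂ (x 0) then μ (x 0) (x 2) else 0)) = (d:ℂ) := by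
    rw [sum_fin4]
    simp only [Matrix.cons_val_zero, Matrix.cons_val_one, Matrix.head_cons, Matrix.cons_val_two, Matrix.cons_val_three, Matrix.tail_cons, star_ite0,
      ite_and, mul_ite, ite_mul, mul_zero, zero_mul, hμ,
      Finset.sum_ite_irrel, Finset.sum_ite_eq', Finset.mem_univ, if_true,
      Finset.sum_const, Finset.sum_const_zero, Finset.card_univ, ZMod.card, smul_eq_mul, smul_zero, mul_zero]
    rw [nsmul_eq_mul, nsmul_eq_mul, hdd, mul_one]
  intro S hS f g
  obtain ⟨t, rfl⟩ := Finset.card_eq_one.mp hS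
  rw [sum_fin4]
  have hrw1 : ∀ y a : ZMod d, (y = c₁ a) ↔ (a = c₁.symm y) := fun y a =>
    eq_comm.trans (Equiv.apply_eq_iff_eq_symm_apply _)
  have hrw3 : ∀ y z c : ZMod d, (y = c + z) ↔ (c = y - z) := fun y z c =>
    eq_comm.trans eq_sub_iff_add_eq.symm
  fin_cases t
  · -- t = 0
    by_cases hfg : f 0 = g 0
    · rw [if_pos (fun s hs => by rw [Finset.mem_singleton] at hs; subst hs; exact hfg), hN]
      simp (config := { decide := true }) only [mergeOn, Finset.mem_singleton,
        Matrix.cons_val_zero, Matrix.cons_val_one, Matrix.head_cons, Matrix.cons_val_two,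
        Matrix.cons_val_three, Matrix.tail_cons, if_true, if_false, ← hfg]
      simp only [star_ite0, ite_and, mul_ite, ite_mul, mul_zero, zero_mul, hμ,
        Finset.sum_ite_irrel, Finset.sum_ite_eq', Finset.mem_univ, if_true,
        Finset.sum_const, Finset.sum_const_zero, Finset.card_univ, ZMod.card,
        smul_zero, mul_zero]
      rw [nsmul_eq_mul, nsmul_eq_mul, hdd, mul_one]
    · rw [if_neg (fun hc => hfg (hc _ (Finset.mem_singleton_self _)))]
      simp (config := { decide := true }) only [mergeOn, Finset.mem_singleton,
        Matrix.cons_val_zero, Matrix.cons_val_one, Matrix.head_cons, Matrix.cons_val_two,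
        Matrix.cons_val_three, Matrix.tail_cons, if_true, if_false]
      refine Finset.sum_eq_zero fun a _ => Finset.sum_eq_zero fun b _ =>
        Finset.sum_eq_zero fun c _ => Finset.sum_eq_zero fun e _ => ?_
      by_cases h2 : b = c₁ (g 0) ∧ e = c + c₂ (g 0)
      · rw [if_neg (fun h1 => hfg (c₁.injective ((h1.1 : b = _).symm.trans h2.1)))]
        exact zero_mul _
      · rw [if_neg h2, star_zero, mul_zero]
  · -- t = 1
    by_cases hfg : f 1 = g 1
    · rw [if_pos (fun s hs => by rw [Finset.mem_singleton] at hs; subst hs; exact hfg), hN]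
      simp (config := { decide := true }) only [mergeOn, Finset.mem_singleton,
        Matrix.cons_val_zero, Matrix.cons_val_one, Matrix.head_cons, Matrix.cons_val_two,
        Matrix.cons_val_three, Matrix.tail_cons, if_true, if_false, ← hfg]
      simp only [hrw1, star_ite0, ite_and, mul_ite, ite_mul, mul_zero, zero_mul, hμ,
        Finset.sum_ite_irrel, Finset.sum_ite_eq', Finset.mem_univ, if_true,
        Finset.sum_const, Finset.sum_const_zero, Finset.card_univ, ZMod.card,
        smul_zero, mul_zero]
      rw [nsmul_eq_mul, nsmul_eq_mul, hdd, mul_one]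
    · rw [if_neg (fun hc => hfg (hc _ (Finset.mem_singleton_self _)))]
      simp (config := { decide := true }) only [mergeOn, Finset.mem_singleton,
        Matrix.cons_val_zero, Matrix.cons_val_one, Matrix.head_cons, Matrix.cons_val_two,
        Matrix.cons_val_three, Matrix.tail_cons, if_true, if_false]
      refine Finset.sum_eq_zero fun a _ => Finset.sum_eq_zero fun b _ =>
        Finset.sum_eq_zero fun c _ => Finset.sum_eq_zero fun e _ => ?_
      by_cases h2 : g 1 = c₁ a ∧ e = c + c₂ a
      · rw [if_neg (fun h1 => hfg ((h1.1 : f 1 = _).trans h2.1.symm))]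
        exact zero_mul _
      · rw [if_neg h2, star_zero, mul_zero]
  · -- t = 2
    by_cases hfg : f 2 = g 2
    · rw [if_pos (fun s hs => by rw [Finset.mem_singleton] at hs; subst hs; exact hfg), hN]
      simp (config := { decide := true }) only [mergeOn, Finset.mem_singleton,
        Matrix.cons_val_zero, Matrix.cons_val_one, Matrix.head_cons, Matrix.cons_val_two,
        Matrix.cons_val_three, Matrix.tail_cons, if_true, if_false, ← hfg]
      simp only [star_ite0, ite_and, mul_ite, ite_mul, mul_zero, zero_mul, hμ,
        Finset.sum_ite_irrel, Finset.sum_ite_eq', Finset.mem_univ, if_true,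
        Finset.sum_const, Finset.sum_const_zero, Finset.card_univ, ZMod.card,
        smul_zero, mul_zero]
      rw [nsmul_eq_mul, nsmul_eq_mul, hdd, mul_one]
    · rw [if_neg (fun hc => hfg (hc _ (Finset.mem_singleton_self _)))]
      simp (config := { decide := true }) only [mergeOn, Finset.mem_singleton,
        Matrix.cons_val_zero, Matrix.cons_val_one, Matrix.head_cons, Matrix.cons_val_two,
        Matrix.cons_val_three, Matrix.tail_cons, if_true, if_false]
      refine Finset.sum_eq_zero fun a _ => Finset.sum_eq_zero fun b _ =>
        Finset.sum_eq_zero fun c _ => Finset.sum_eq_zero fun e _ => ?_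
      by_cases h2 : b = c₁ a ∧ e = g 2 + c₂ a
      · rw [if_neg (fun h1 => hfg (add_right_cancel ((h1.2 : e = _).symm.trans h2.2)))]
        exact zero_mul _
      · rw [if_neg h2, star_zero, mul_zero]
  · -- t = 3
    by_cases hfg : f 3 = g 3
    · rw [if_pos (fun s hs => by rw [Finset.mem_singleton] at hs; subst hs; exact hfg), hN]
      simp (config := { decide := true }) only [mergeOn, Finset.mem_singleton,
        Matrix.cons_val_zero, Matrix.cons_val_one, Matrix.head_cons, Matrix.cons_val_two,
        Matrix.cons_val_three, Matrix.tail_cons, if_true, if_false, ← hfg]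
      simp only [hrw3, star_ite0, ite_and, mul_ite, ite_mul, mul_zero, zero_mul, hμ,
        Finset.sum_ite_irrel, Finset.sum_ite_eq', Finset.mem_univ, if_true,
        Finset.sum_const, Finset.sum_const_zero, Finset.card_univ, ZMod.card,
        smul_zero, mul_zero]
      rw [nsmul_eq_mul, nsmul_eq_mul, hdd, mul_one]
    · rw [if_neg (fun hc => hfg (hc _ (Finset.mem_singleton_self _)))]
      simp (config := { decide := true }) only [mergeOn, Finset.mem_singleton,
        Matrix.cons_val_zero, Matrix.cons_val_one, Matrix.head_cons, Matrix.cons_val_two,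
        Matrix.cons_val_three, Matrix.tail_cons, if_true, if_false]
      refine Finset.sum_eq_zero fun a _ => Finset.sum_eq_zero fun b _ =>
        Finset.sum_eq_zero fun c _ => Finset.sum_eq_zero fun e _ => ?_
      by_cases h2 : b = c₁ a ∧ g 3 = c + c₂ a
      · rw [if_neg (fun h1 => hfg ((h1.2 : f 3 = _).trans h2.2.symm))]
        exact zero_mul _
      · rw [if_neg h2, star_zero, mul_zero]

/-- the vectors ψ_{i,j} = |i+j⟩ ⊗ |φ_{i,j}⟩ (with φ_{i,j} the
normalized generalized Bell states) are pairwise orthogonal, and all row sums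
Σ_j |j⟩⊗ψ_{i,j} and column sums Σ_i |i⟩⊗ψ_{i,j} are 1-uniform 4-qudit states. -/
theorem stmt16 (d : ℕ) [NeZero d] (hd : 2 ≤ d)
    (ω : ℂ) (hω : ω = Complex.exp (2 * Real.pi * Complex.I / d))
    (ψ : ZMod d → ZMod d → ZMod d → ZMod d → ZMod d → ℂ)
    (hψ : ∀ i j a u v, ψ i j a u v =
      (if a = i + j then 1 else 0) *
        ((1 / Real.sqrt d : ℝ) * ω ^ ((i * v : ZMod d).val) * (if u = v + j then 1 else 0))) :
    (∀ i j i' j' : ZMod d, (i, j) ≠ (i', j') →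
      ∑ a : ZMod d, ∑ u : ZMod d, ∑ v : ZMod d,
        star (ψ i j a u v) * ψ i' j' a u v = 0) ∧
    (∀ i : ZMod d, IsUniform 4 d 1 (fun x => ψ i (x 0) (x 1) (x 2) (x 3))) ∧
    (∀ j : ZMod d, IsUniform 4 d 1 (fun x => ψ (x 0) j (x 1) (x 2) (x 3))) := by
  have hz : (2 * (Real.pi:ℂ) * Complex.I / d) +
      (starRingEnd ℂ) (2 * (Real.pi:ℂ) * Complex.I / d) = 0 := by
    rw [map_div₀, map_mul, map_mul, Complex.conj_I, Complex.conj_ofReal, map_ofNat,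
      Complex.conj_natCast]
    ring
  have hsω : ω * star ω = 1 := by
    rw [hω, Complex.star_def, ← Complex.exp_conj, ← Complex.exp_add, hz, Complex.exp_zero]
  have hsd : ((1/Real.sqrt d : ℝ):ℂ) * ((1/Real.sqrt d : ℝ):ℂ) = (d:ℂ)⁻¹ := by
    rw [← Complex.ofReal_mul, div_mul_div_comm, one_mul,
      Real.mul_self_sqrt (Nat.cast_nonneg d), one_div, Complex.ofReal_inv,
      Complex.ofReal_natCast]
  have hμkey : ∀ k : ℕ, (((1/Real.sqrt d:ℝ):ℂ) * ω^k) *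
      star (((1/Real.sqrt d:ℝ):ℂ) * ω^k) = (d:ℂ)⁻¹ := by
    intro k
    rw [star_mul', star_pow]
    have hst : star (((1/Real.sqrt d:ℝ):ℂ)) = ((1/Real.sqrt d:ℝ):ℂ) := by
      rw [Complex.star_def, Complex.conj_ofReal]
    rw [hst]
    have hre : ((1/Real.sqrt d:ℝ):ℂ) * ω^k * (((1/Real.sqrt d:ℝ):ℂ) * (star ω)^k) =
        (((1/Real.sqrt d:ℝ):ℂ) * ((1/Real.sqrt d:ℝ):ℂ)) * ((ω * star ω)^k) := by
      rw [mul_pow]; ring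
    rw [hre, hsω, one_pow, mul_one, hsd]
  refine ⟨?_, ?_, ?_⟩
  · -- orthogonality
    intro i j i' j' hne
    refine Finset.sum_eq_zero fun a _ => Finset.sum_eq_zero fun u _ =>
      Finset.sum_eq_zero fun v _ => ?_
    simp only [hψ]
    by_cases h4 : u = v + j'
    · by_cases h3 : a = i' + j'
      · by_cases h1 : a = i + j
        · by_cases h2 : u = v + j
          · exfalso
            have hj : j = j' := add_left_cancel (h2.symm.trans h4)
            have hi : i = i' := by
              subst hj
              exact add_right_cancel (h1.symm.trans h3)
            exact hne (by rw [hi, hj])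
          · simp [h2]
        · simp [h1]
      · simp [h3]
    · simp [h4]
  · -- rows
    intro i
    have hfun : (fun x : Fin 4 → ZMod d => ψ i (x 0) (x 1) (x 2) (x 3)) =
        (fun x => if x 1 = (Equiv.addLeft i) (x 0) ∧ x 3 = x 2 + -(x 0) then
          ((1/Real.sqrt d : ℝ):ℂ) * ω ^ ((i * (x 2 + -(x 0)) : ZMod d).val) else 0) := by
      funext x
      simp only [hψ]
      rw [show (Equiv.addLeft i) (x 0) = i + x 0 from rfl]
      by_cases h1 : x 1 = i + x 0
      · by_cases h2 : x 2 = x 3 + x 0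
        · have h3 : x 3 = x 2 + -(x 0) := by rw [h2]; ring
          rw [if_pos h1, if_pos h2, if_pos ⟨h1, h3⟩, ← h3]
          ring
        · have h3 : ¬(x 1 = i + x 0 ∧ x 3 = x 2 + -(x 0)) :=
            fun hc => h2 (by rw [hc.2]; ring : x 2 = x 3 + x 0)
          rw [if_neg h2, if_neg h3]
          ring
      · have h3 : ¬(x 1 = i + x 0 ∧ x 3 = x 2 + -(x 0)) := fun hc => h1 hc.1
        rw [if_neg h1, if_neg h3]
        ring
    rw [hfun]
    exact uniform_aux (Equiv.addLeft i) (fun p => -p)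
      (fun p q => ((1/Real.sqrt d : ℝ):ℂ) * ω ^ ((i * (q + -p) : ZMod d).val))
      (fun p q => hμkey _)
  · -- columns
    intro j
    have hfun : (fun x : Fin 4 → ZMod d => ψ (x 0) j (x 1) (x 2) (x 3)) =
        (fun x => if x 1 = (Equiv.addRight j) (x 0) ∧ x 3 = x 2 + -j then
          ((1/Real.sqrt d : ℝ):ℂ) * ω ^ (((x 0) * (x 2 + -j) : ZMod d).val) else 0) := by
      funext x
      simp only [hψ]
      rw [show (Equiv.addRight j) (x 0) = x 0 + j from rfl]
      by_cases h1 : x 1 = x 0 + j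
      · by_cases h2 : x 2 = x 3 + j
        · have h3 : x 3 = x 2 + -j := by rw [h2]; ring
          rw [if_pos h1, if_pos h2, if_pos ⟨h1, h3⟩, ← h3]
          ring
        · have h3 : ¬(x 1 = x 0 + j ∧ x 3 = x 2 + -j) :=
            fun hc => h2 (by rw [hc.2]; ring : x 2 = x 3 + j)
          rw [if_neg h2, if_neg h3]
          ring
      · have h3 : ¬(x 1 = x 0 + j ∧ x 3 = x 2 + -j) := fun hc => h1 hc.1
        rw [if_neg h1, if_neg h3]
        ring
    rw [hfun]
    exact uniform_aux (Equiv.addRight j) (fun _ => -j)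
      (fun p q => ((1/Real.sqrt d : ℝ):ℂ) * ω ^ ((p * (q + -j) : ZMod d).val))
      (fun p q => hμkey _)
end

section
/- Let p be a prime, ω = exp(2πi/p), and for i₁,i₂,i₃ ∈ ℤ/p define |φ_{i₁,i₂,i₃}⟩ = p^{−3/2} Σ_{i₄,i₅,i₆} ω^{A(i₁,…,i₆)} |i₄,i₅,i₆⟩ where A(i₁,…,i₆) = i₁i₂+i₂i₃+i₃i₄+i₄i₅+i₅i₆+i₆i₁+i₁i₃+i₄i₆+i₂i₅ (mod p). Then the p³ vectors {|φ_{i₁,i₂,i₃}⟩} form an orthonormal basis of (ℂ^p)^{⊗3}. -/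
open Finset

private lemma pow_mod_aux {p : ℕ} {ω : ℂ} (h1 : ω ^ p = 1) (n : ℕ) :
    ω ^ (n % p) = ω ^ n := by
  conv_rhs => rw [← Nat.div_add_mod n p]
  rw [pow_add, pow_mul, h1, one_pow, one_mul]

private lemma e_add {p : ℕ} [NeZero p] {ω : ℂ} (h1 : ω ^ p = 1) (a b : ZMod p) :
    ω ^ ((a + b).val) = ω ^ a.val * ω ^ b.val := by
  rw [ZMod.val_add, pow_mod_aux h1, pow_add]

private lemma e_star {p : ℕ} [NeZero p] {ω : ℂ} (h1 : ω ^ p = 1)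
    (hs : star ω * ω = 1) (a b : ZMod p) :
    star (ω ^ a.val) * ω ^ b.val = ω ^ ((b - a).val) := by
  have h2 : a + (b - a) = b := by ring
  calc star (ω ^ a.val) * ω ^ b.val
      = star (ω ^ a.val) * (ω ^ a.val * ω ^ ((b - a).val)) := by
        rw [← e_add h1, h2]
    _ = (star ω * ω) ^ a.val * ω ^ ((b - a).val) := by
        rw [star_pow, ← mul_assoc, ← mul_pow]
    _ = ω ^ ((b - a).val) := by rw [hs, one_pow, one_mul]

private lemma sum_val_range {p : ℕ} [NeZero p] (f : ℕ → ℂ) :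
    ∑ a : ZMod p, f a.val = ∑ k ∈ range p, f k := by
  apply Finset.sum_nbij' (i := fun (a : ZMod p) => a.val) (j := fun k => (k : ZMod p)) <;>
    simp +contextual [ZMod.val_lt, ZMod.val_cast_of_lt, Finset.mem_range, Nat.mod_eq_of_lt]

private lemma char_sum {p : ℕ} [NeZero p] (hp : p.Prime) {ω : ℂ}
    (hprim : IsPrimitiveRoot ω p) (c : ZMod p) :
    ∑ a : ZMod p, ω ^ (c * a).val = if c = 0 then (p : ℂ) else 0 := by
  split_ifs with hc
  · subst hc
    simp [ZMod.val_zero, ZMod.card]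
  · haveI := Fact.mk hp
    have h1 : ∑ a : ZMod p, ω ^ (c * a).val = ∑ a : ZMod p, ω ^ a.val :=
      Fintype.sum_equiv (Equiv.mulLeft₀ c hc) _ _ (fun a => rfl)
    rw [h1, sum_val_range (fun k => ω ^ k), hprim.geom_sum_eq_zero hp.one_lt]

/-- for a prime p and ω = exp(2πi/p), the p³ vectors
φ_{i₁,i₂,i₃} = p^{−3/2} Σ_{i₄,i₅,i₆} ω^{A(i₁,…,i₆)} |i₄,i₅,i₆⟩, with
A = i₁i₂+i₂i₃+i₃i₄+i₄i₅+i₅i₆+i₆i₁+i₁i₃+i₄i₆+i₂i₅ (mod p), form an orthonormal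
basis of (ℂ^p)^{⊗3} (p³ pairwise orthonormal vectors in a p³-dimensional space). -/
theorem stmt19 (p : ℕ) [NeZero p] (hp : p.Prime)
    (ω : ℂ) (hω : ω = Complex.exp (2 * Real.pi * Complex.I / p))
    (φ : ZMod p → ZMod p → ZMod p → ZMod p → ZMod p → ZMod p → ℂ)
    (hφ : ∀ i₁ i₂ i₃ i₄ i₅ i₆, φ i₁ i₂ i₃ i₄ i₅ i₆ =
      (((p : ℝ) ^ (3 : ℕ)) ^ ((2 : ℝ)⁻¹) )⁻¹ *
        ω ^ ((i₁*i₂ + i₂*i₃ + i₃*i₄ + i₄*i₅ + i₅*i₆ + i₆*i₁ + i₁*i₃ + i₄*i₆ + i₂*i₅ :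
          ZMod p).val)) :
    ∀ i₁ i₂ i₃ j₁ j₂ j₃ : ZMod p,
      ∑ i₄ : ZMod p, ∑ i₅ : ZMod p, ∑ i₆ : ZMod p,
        star (φ i₁ i₂ i₃ i₄ i₅ i₆) * φ j₁ j₂ j₃ i₄ i₅ i₆ =
      if (i₁, i₂, i₃) = (j₁, j₂, j₃) then 1 else 0 := by
  intro i₁ i₂ i₃ j₁ j₂ j₃
  have hppos : 0 < p := hp.pos
  have hp0 : (0 : ℝ) < (p : ℝ) ^ (3 : ℕ) := by positivity
  have hprim : IsPrimitiveRoot ω p := hω ▸ Complex.isPrimitiveRoot_exp p (NeZero.ne p)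
  have h1 : ω ^ p = 1 := hprim.pow_eq_one
  have hs : star ω * ω = 1 := by
    rw [hω, Complex.star_def, ← Complex.exp_conj]
    have hconj : (starRingEnd ℂ) (2 * Real.pi * Complex.I / p) =
        -(2 * Real.pi * Complex.I / p) := by
      simp [map_div₀, Complex.conj_I, map_ofNat]
      ring
    rw [hconj, Complex.exp_neg]
    exact inv_mul_cancel₀ (Complex.exp_ne_zero _)
  set c : ℝ := ((((p : ℝ) ^ (3 : ℕ)) ^ ((2 : ℝ)⁻¹))⁻¹) with hcdef
  have hc2 : (c : ℂ) * (c : ℂ) = ((p : ℂ) ^ (3 : ℕ))⁻¹ := by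
    have : c * c = (((p : ℝ) ^ (3 : ℕ)))⁻¹ := by
      rw [hcdef, ← mul_inv]
      congr 1
      rw [← Real.rpow_add hp0]
      norm_num
    rw [← Complex.ofReal_mul, this]
    push_cast
    ring
  set C : ZMod p := j₁*j₂ + j₂*j₃ + j₁*j₃ - i₁*i₂ - i₂*i₃ - i₁*i₃ with hCdef
  have key : ∀ i₄ i₅ i₆ : ZMod p,
      star (φ i₁ i₂ i₃ i₄ i₅ i₆) * φ j₁ j₂ j₃ i₄ i₅ i₆ =
      ((p : ℂ) ^ (3 : ℕ))⁻¹ * (ω ^ C.val *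
        (ω ^ ((j₃ - i₃) * i₄).val * (ω ^ ((j₂ - i₂) * i₅).val * ω ^ ((j₁ - i₁) * i₆).val))) := by
    intro i₄ i₅ i₆
    rw [hφ, hφ]
    have hB : (j₁*j₂ + j₂*j₃ + j₃*i₄ + i₄*i₅ + i₅*i₆ + i₆*j₁ + j₁*j₃ + i₄*i₆ + j₂*i₅ : ZMod p)
        - (i₁*i₂ + i₂*i₃ + i₃*i₄ + i₄*i₅ + i₅*i₆ + i₆*i₁ + i₁*i₃ + i₄*i₆ + i₂*i₅)
        = C + (j₃ - i₃) * i₄ + ((j₂ - i₂) * i₅ + (j₁ - i₁) * i₆) := by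
      rw [hCdef]; ring
    calc star ((c : ℂ) * ω ^ ((i₁*i₂ + i₂*i₃ + i₃*i₄ + i₄*i₅ + i₅*i₆ + i₆*i₁ + i₁*i₃ + i₄*i₆ + i₂*i₅ : ZMod p).val))
          * ((c : ℂ) * ω ^ ((j₁*j₂ + j₂*j₃ + j₃*i₄ + i₄*i₅ + i₅*i₆ + i₆*j₁ + j₁*j₃ + i₄*i₆ + j₂*i₅ : ZMod p).val))
        = ((c : ℂ) * (c : ℂ)) * (star (ω ^ ((i₁*i₂ + i₂*i₃ + i₃*i₄ + i₄*i₅ + i₅*i₆ + i₆*i₁ + i₁*i₃ + i₄*i₆ + i₂*i₅ : ZMod p).val))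
            * ω ^ ((j₁*j₂ + j₂*j₃ + j₃*i₄ + i₄*i₅ + i₅*i₆ + i₆*j₁ + j₁*j₃ + i₄*i₆ + j₂*i₅ : ZMod p).val)) := by
          rw [star_mul', Complex.star_def, Complex.conj_ofReal]; ring
      _ = ((p : ℂ) ^ (3 : ℕ))⁻¹ * (ω ^ C.val *
            (ω ^ ((j₃ - i₃) * i₄).val * (ω ^ ((j₂ - i₂) * i₅).val * ω ^ ((j₁ - i₁) * i₆).val))) := by
          rw [hc2, e_star h1 hs, hB, e_add h1, e_add h1, e_add h1]; ring
  simp only [key]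
  simp only [← Finset.mul_sum]
  rw [char_sum hp hprim (j₁ - i₁)]
  simp only [← Finset.sum_mul]
  rw [char_sum hp hprim (j₂ - i₂), char_sum hp hprim (j₃ - i₃)]
  by_cases h₁ : j₁ = i₁ <;> by_cases h₂ : j₂ = i₂ <;> by_cases h₃ : j₃ = i₃
  · subst h₁; subst h₂; subst h₃
    have hC0 : C = 0 := by rw [hCdef]; ring
    rw [hC0]
    simp only [ZMod.val_zero, pow_zero, sub_self, if_pos rfl, if_pos rfl]
    have hpne : (p : ℂ) ≠ 0 := by
      exact_mod_cast Nat.cast_ne_zero.mpr (NeZero.ne p)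
    field_simp
    simp
  all_goals {
    have hne : (i₁, i₂, i₃) ≠ (j₁, j₂, j₃) := by
      rintro h
      rw [Prod.mk.injEq, Prod.mk.injEq] at h
      obtain ⟨a, b, cc⟩ := h
      first | exact h₁ a.symm | exact h₂ b.symm | exact h₃ cc.symm
    rw [if_neg hne]
    simp [sub_eq_zero, h₁, h₂, h₃]
  }
end
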